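/- If a graph G has no perfect matching and G is interval colorable, then the minimum number of colors in an interval coloring of G satisfies w(G) ≥ max{Δ(G), 2·δ(G)}. -/

import Mathlib

/-- The set of colors appearing on edges incident to `v` under edge coloring `c`. -/
def colorsAt {V : Type*} (G : SimpleGraph V) (c : Sym2 V → ℕ) (v : V) : Set ℕ :=
  {i | ∃ e ∈ G.edgeSet, v ∈ e ∧ c e = i}

/-- A set of naturals is an interval of consecutive integers. -/
def IsIntervalSet (S : Set ℕ) : Prop :=
  ∀ i j k, i ∈ S → j ∈ S → i ≤ k → k ≤ j → k ∈ S

/-- `c` is a proper edge coloring of `G`: distinct edges sharing a vertex get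
different colors. -/
def IsProperEdgeColoring {V : Type*} (G : SimpleGraph V) (c : Sym2 V → ℕ) : Prop :=
  ∀ e₁ ∈ G.edgeSet, ∀ e₂ ∈ G.edgeSet, e₁ ≠ e₂ → (∃ v, v ∈ e₁ ∧ v ∈ e₂) → c e₁ ≠ c e₂

/-- An interval `t`-coloring: proper edge coloring with colors `1,…,t`, every color
used, and the colors at each vertex forming an interval of consecutive integers. -/
def IsIntervalColoring {V : Type*} (G : SimpleGraph V) (t : ℕ) (c : Sym2 V → ℕ) : Prop :=
  IsProperEdgeColoring G c ∧
  (∀ e ∈ G.edgeSet, c e ∈ Set.Icc 1 t) ∧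
  (∀ i ∈ Set.Icc 1 t, ∃ e ∈ G.edgeSet, c e = i) ∧
  (∀ v, IsIntervalSet (colorsAt G c v))

/-- A cyclic interval `t`-coloring: proper edge coloring with colors `1,…,t`, every
color used, and for each vertex the set of colors at it, or its complement in
`{1,…,t}`, is an interval of consecutive integers. -/
def IsCyclicIntervalColoring {V : Type*} (G : SimpleGraph V) (t : ℕ) (c : Sym2 V → ℕ) : Prop :=
  IsProperEdgeColoring G c ∧
  (∀ e ∈ G.edgeSet, c e ∈ Set.Icc 1 t) ∧
  (∀ i ∈ Set.Icc 1 t, ∃ e ∈ G.edgeSet, c e = i) ∧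
  (∀ v, IsIntervalSet (colorsAt G c v) ∨ IsIntervalSet (Set.Icc 1 t \ colorsAt G c v))

/-- If `G` has no perfect matching, then any interval `t`-coloring of `G` satisfies
`t ≥ max {Δ(G), 2·δ(G)}`; in particular `w(G) ≥ max {Δ(G), 2·δ(G)}`. -/
theorem stmt4 {V : Type*} [Fintype V] [DecidableEq V] (G : SimpleGraph V)
    [DecidableRel G.Adj]
    (hpm : ¬ ∃ M : G.Subgraph, M.IsPerfectMatching)
    (t : ℕ) (c : Sym2 V → ℕ) (h : IsIntervalColoring G t c) :
    max G.maxDegree (2 * G.minDegree) ≤ t := by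
  obtain ⟨hp, hrange, hused, hint⟩ := h
  -- Finset of colors at a vertex
  set S : V → Finset ℕ := fun v => (G.incidenceFinset v).image c with hS
  have hmemS : ∀ v i, i ∈ S v → i ∈ colorsAt G c v := by
    intro v i hi
    simp only [hS, Finset.mem_image, SimpleGraph.mem_incidenceFinset] at hi
    obtain ⟨e, he, rfl⟩ := hi
    exact ⟨e, he.1, he.2, rfl⟩
  have hcard : ∀ v, (S v).card = G.degree v := by
    intro v
    rw [hS]
    rw [Finset.card_image_of_injOn, SimpleGraph.card_incidenceFinset_eq_degree]
    intro e₁ h₁ e₂ h₂ hcc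
    by_contra hne
    simp only [Finset.mem_coe, SimpleGraph.mem_incidenceFinset] at h₁ h₂
    exact hp e₁ h₁.1 e₂ h₂.1 hne ⟨v, h₁.2, h₂.2⟩ hcc
  have hsub : ∀ v, S v ⊆ Finset.Icc 1 t := by
    intro v i hi
    simp only [hS, Finset.mem_image, SimpleGraph.mem_incidenceFinset] at hi
    obtain ⟨e, he, rfl⟩ := hi
    have := hrange e he.1
    rw [Set.mem_Icc] at this
    rw [Finset.mem_Icc]
    exact this
  have hdegt : ∀ v, G.degree v ≤ t := by
    intro v
    calc G.degree v = (S v).card := (hcard v).symm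
    _ ≤ (Finset.Icc 1 t).card := Finset.card_le_card (hsub v)
    _ = t := by rw [Nat.card_Icc]; omega
  rw [max_le_iff]
  refine ⟨SimpleGraph.maxDegree_le_of_forall_degree_le _ _ hdegt, ?_⟩
  by_contra ht
  push_neg at ht
  set d := G.minDegree with hd
  have hd1 : 1 ≤ d := by omega
  -- every vertex sees color d
  have hkey : ∀ v, ∃ w, G.Adj v w ∧ c s(v, w) = d := by
    intro v
    have hdv : d ≤ G.degree v := G.minDegree_le_degree v
    have hne : (S v).Nonempty := by
      rw [← Finset.card_pos, hcard v]; omega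
    set a := (S v).min' hne with ha
    set b := (S v).max' hne with hb
    have haS : a ∈ S v := Finset.min'_mem _ _
    have hbS : b ∈ S v := Finset.max'_mem _ _
    have hsub' : S v ⊆ Finset.Icc a b := fun i hi =>
      Finset.mem_Icc.2 ⟨Finset.min'_le _ _ hi, Finset.le_max' _ _ hi⟩
    have hcardle : G.degree v ≤ b + 1 - a := by
      rw [← hcard v]
      calc (S v).card ≤ (Finset.Icc a b).card := Finset.card_le_card hsub'
      _ = b + 1 - a := Nat.card_Icc a b
    have ha1 : 1 ≤ a := (Finset.mem_Icc.1 (hsub v haS)).1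
    have hbt : b ≤ t := (Finset.mem_Icc.1 (hsub v hbS)).2
    have had : a ≤ d := by omega
    have hdb : d ≤ b := by omega
    have : d ∈ colorsAt G c v :=
      hint v a b d (hmemS v a haS) (hmemS v b hbS) had hdb
    obtain ⟨e, he, hve, hce⟩ := this
    induction e with
    | h x y =>
      rw [Sym2.mem_iff] at hve
      rw [SimpleGraph.mem_edgeSet] at he
      rcases hve with rfl | rfl
      · exact ⟨y, he, hce⟩
      · exact ⟨x, he.symm, by rwa [Sym2.eq_swap]⟩
  -- build perfect matching from color-d edges
  apply hpm
  refine ⟨{ verts := Set.univ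
            Adj := fun x y => G.Adj x y ∧ c s(x, y) = d
            adj_sub := fun hxy => hxy.1
            edge_vert := fun _ => Set.mem_univ _
            symm := ⟨fun x y hxy => ⟨hxy.1.symm, by rw [Sym2.eq_swap]; exact hxy.2⟩⟩ },
         ?_, fun v => Set.mem_univ v⟩
  intro v _
  obtain ⟨w, hw, hcw⟩ := hkey v
  refine ⟨w, ⟨hw, hcw⟩, ?_⟩
  intro w' ⟨hw', hcw'⟩
  by_contra hne
  have hee : s(v, w') ≠ s(v, w) := by
    intro heq
    rw [Sym2.eq_iff] at heq
    rcases heq with ⟨-, h1⟩ | ⟨h1, -⟩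
    · exact hne h1
    · exact G.ne_of_adj hw h1
  exact hp s(v, w') (G.mem_edgeSet.2 hw') s(v, w) (G.mem_edgeSet.2 hw)
    hee ⟨v, Sym2.mem_mk_left _ _, Sym2.mem_mk_left _ _⟩ (by rw [hcw, hcw'])
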